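/- Let ℓ ≥ 1 and define G_ℓ(r) = r - C_ℓ · r^{ℓ+1} · Σ_{i=0}^{ℓ-1} (-1)^i · binom(ℓ-1, i) · ((ℓ+1)!·(ℓ+i-1)! / ((ℓ-1)!·(ℓ+i+1)!)) · r^i, where C_ℓ = binom(2ℓ,ℓ)/(ℓ+1) is the ℓ-th Catalan number, equivalently G_ℓ(r) = r - 2·binom(2ℓ-1,ℓ-1)·Σ_{i=0}^{ℓ-1} (-1)^i r^{i+ℓ+1} binom(ℓ,i)·(ℓ-i)/((ℓ+i)(ℓ+i+1)). Then G_ℓ(1/2) = (1/2)·(1 - 4^{-ℓ}·binom(2ℓ, ℓ)). -/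

import Mathlib

open Finset

lemma term_deriv (n i : ℕ) (x : ℝ) :
    HasDerivAt (fun x : ℝ => (-1:ℝ)^i * (n.choose i) *
      (x^(n+1+i)/((n:ℝ)+1+i) - 2*x^(n+2+i)/((n:ℝ)+2+i)))
      ((-1:ℝ)^i * (n.choose i) * ((x^(n+i) - 2*x^(n+1+i)))) x := by
  have h1 : HasDerivAt (fun x : ℝ => x^(n+1+i)) (((n+1+i : ℕ) : ℝ) * x^(n+i)) x := by
    simpa using hasDerivAt_pow (n+1+i) x
  have h2 : HasDerivAt (fun x : ℝ => x^(n+2+i)) (((n+2+i : ℕ) : ℝ) * x^(n+1+i)) x := by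
    simpa [show n+2+i-1 = n+1+i by omega] using hasDerivAt_pow (n+2+i) x
  have hc1 : ((n:ℝ)+1+i) ≠ 0 := by positivity
  have hc2 : ((n:ℝ)+2+i) ≠ 0 := by positivity
  have := ((h1.div_const ((n:ℝ)+1+i)).sub
    (((h2.const_mul (2:ℝ))).div_const ((n:ℝ)+2+i))).const_mul ((-1:ℝ)^i * (n.choose i))
  refine this.congr_deriv ?_
  push_cast
  field_simp

lemma sum_deriv (n : ℕ) (x : ℝ) :
    HasDerivAt (fun x : ℝ => ∑ i ∈ range (n+1), (-1:ℝ)^i * (n.choose i) *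
      (x^(n+1+i)/((n:ℝ)+1+i) - 2*x^(n+2+i)/((n:ℝ)+2+i)))
      (x^n * (1-x)^n * (1-2*x)) x := by
  have h : ∀ i ∈ range (n+1), HasDerivAt (fun x : ℝ => (-1:ℝ)^i * (n.choose i) *
      (x^(n+1+i)/((n:ℝ)+1+i) - 2*x^(n+2+i)/((n:ℝ)+2+i)))
      ((-1:ℝ)^i * (n.choose i) * ((x^(n+i) - 2*x^(n+1+i)))) x := fun i _ => term_deriv n i x
  have := HasDerivAt.fun_sum h
  refine this.congr_deriv ?_
  have hbin : ((1:ℝ) - x)^n = ∑ i ∈ range (n+1), (-1:ℝ)^i * (n.choose i) * x^i := by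
    have := add_pow (-x) (1:ℝ) n
    simp only [one_pow, mul_one] at this
    rw [show (1:ℝ) - x = -x + 1 by ring, this]
    refine Finset.sum_congr rfl fun i _ => ?_
    rw [neg_pow]
    ring
  rw [hbin, Finset.mul_sum, Finset.sum_mul]
  refine Finset.sum_congr rfl fun i _ => ?_
  rw [pow_add, pow_add, pow_add]
  ring

lemma key (n : ℕ) :
    ∑ i ∈ range (n+1), (-1:ℝ)^i * (n.choose i) * (1/2:ℝ)^i /
      (((n:ℝ)+1+i)*((n:ℝ)+2+i)) = (1/2:ℝ)^(n+1) / ((n:ℝ)+1) := by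
  set F : ℝ → ℝ := fun x => ∑ i ∈ range (n+1), (-1:ℝ)^i * (n.choose i) *
      (x^(n+1+i)/((n:ℝ)+1+i) - 2*x^(n+2+i)/((n:ℝ)+2+i)) with hF
  set g : ℝ → ℝ := fun x => x^(n+1) * (1-x)^(n+1) / ((n:ℝ)+1) with hg
  have hg' : ∀ x : ℝ, HasDerivAt g (x^n * (1-x)^n * (1-2*x)) x := by
    intro x
    have h1 : HasDerivAt (fun x : ℝ => x^(n+1)) (((n+1:ℕ):ℝ) * x^n) x := by
      simpa using hasDerivAt_pow (n+1) x
    have h2 : HasDerivAt (fun x : ℝ => (1-x)^(n+1)) (((n+1:ℕ):ℝ) * (1-x)^n * (-1)) x := by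
      have : HasDerivAt (fun x : ℝ => 1 - x) (-1) x := by
        simpa using (hasDerivAt_id x).const_sub 1
      exact (hasDerivAt_pow (n+1) ((1:ℝ)-x)).comp x this |>.congr_deriv (by push_cast; ring)
    have := (h1.mul h2).div_const ((n:ℝ)+1)
    refine this.congr_deriv ?_
    have hne : ((n:ℝ)+1) ≠ 0 := by positivity
    push_cast
    field_simp
    ring
  have hdiff : Differentiable ℝ (fun x => F x - g x) :=
    fun x => ((sum_deriv n x).sub (hg' x)).differentiableAt
  have hconst : (fun x => F x - g x) (1/2) = (fun x => F x - g x) 0 := by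
    apply is_const_of_deriv_eq_zero hdiff
    intro x
    have := ((sum_deriv n x).sub (hg' x))
    simp only [sub_self] at this
    exact this.deriv
  have hF0 : F 0 = 0 := by
    simp only [hF]
    apply Finset.sum_eq_zero
    intro i _
    simp [pow_succ, zero_pow, Nat.add_assoc]
  have hg0 : g 0 = 0 := by simp [hg]
  have hFhalf : F (1/2) = g (1/2) := by
    have := hconst
    simp only [hF0, hg0, sub_zero] at this
    linarith [this]
  have hghalf : g (1/2) = (1/2:ℝ)^(2*n+2) / ((n:ℝ)+1) := by
    simp only [hg]
    norm_num
    ring_nf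
  -- F (1/2) expansion
  have hexp : F (1/2) = (1/2:ℝ)^(n+1) * ∑ i ∈ range (n+1),
      (-1:ℝ)^i * (n.choose i) * (1/2:ℝ)^i / (((n:ℝ)+1+i)*((n:ℝ)+2+i)) := by
    simp only [hF, Finset.mul_sum]
    refine Finset.sum_congr rfl fun i _ => ?_
    have hc1 : ((n:ℝ)+1+i) ≠ 0 := by positivity
    have hc2 : ((n:ℝ)+2+i) ≠ 0 := by positivity
    rw [pow_add, pow_add, pow_add]
    field_simp
    ring
  have hne : (1/2:ℝ)^(n+1) ≠ 0 := by positivity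
  apply mul_left_cancel₀ hne
  rw [← hexp, hFhalf, hghalf, show 2*n+2 = (n+1)+(n+1) by ring, pow_add]
  ring

theorem stmt8 (ℓ : ℕ) (hℓ : 1 ≤ ℓ) (G : ℝ → ℝ)
    (hG : ∀ r : ℝ, G r = r - ((Nat.choose (2 * ℓ) ℓ : ℝ) / (ℓ + 1)) * r ^ (ℓ + 1) *
      ∑ i ∈ Finset.range ℓ, (-1 : ℝ) ^ i * (Nat.choose (ℓ - 1) i : ℝ) *
        ((Nat.factorial (ℓ + 1) : ℝ) * (Nat.factorial (ℓ + i - 1) : ℝ) /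
          ((Nat.factorial (ℓ - 1) : ℝ) * (Nat.factorial (ℓ + i + 1) : ℝ))) * r ^ i) :
    G (1 / 2) = (1 / 2) * (1 - (4 : ℝ) ^ (-(ℓ : ℤ)) * (Nat.choose (2 * ℓ) ℓ : ℝ)) := by
  obtain ⟨n, rfl⟩ : ∃ n, ℓ = n + 1 := ⟨ℓ-1, (Nat.succ_pred_eq_of_pos hℓ).symm⟩
  rw [hG]
  have hsum : ∑ i ∈ Finset.range (n+1), (-1 : ℝ) ^ i * (Nat.choose (n+1-1) i : ℝ) *
      ((Nat.factorial (n+1+1) : ℝ) * (Nat.factorial (n+1+i-1) : ℝ) /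
        ((Nat.factorial (n+1-1) : ℝ) * (Nat.factorial (n+1+i+1) : ℝ))) * (1/2:ℝ) ^ i
      = ((n:ℝ)+2) * (1/2:ℝ)^(n+1) := by
    have hterm : ∀ i ∈ Finset.range (n+1), (-1 : ℝ) ^ i * (Nat.choose (n+1-1) i : ℝ) *
        ((Nat.factorial (n+1+1) : ℝ) * (Nat.factorial (n+1+i-1) : ℝ) /
          ((Nat.factorial (n+1-1) : ℝ) * (Nat.factorial (n+1+i+1) : ℝ))) * (1/2:ℝ) ^ i
        = ((n:ℝ)+1)*((n:ℝ)+2) *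
          ((-1:ℝ)^i * (n.choose i) * (1/2:ℝ)^i / (((n:ℝ)+1+i)*((n:ℝ)+2+i))) := by
      intro i _
      simp only [show n+1-1 = n from rfl, show n+1+i-1 = n+i by omega,
        show n+1+1 = n+2 from rfl, show n+1+i+1 = n+i+2 by omega]
      have e1 : (Nat.factorial (n+2) : ℝ) = ((n:ℝ)+2)*((n:ℝ)+1)*(Nat.factorial n : ℝ) := by
        rw [Nat.factorial_succ, Nat.factorial_succ]; push_cast; ring
      have e2 : (Nat.factorial (n+i+2) : ℝ)
          = ((n:ℝ)+(i:ℝ)+2)*((n:ℝ)+(i:ℝ)+1)*(Nat.factorial (n+i) : ℝ) := by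
        rw [Nat.factorial_succ, Nat.factorial_succ]; push_cast; ring
      rw [e1, e2]
      have h1 : (Nat.factorial n : ℝ) ≠ 0 := Nat.cast_ne_zero.2 (Nat.factorial_ne_zero n)
      have h2 : (Nat.factorial (n+i) : ℝ) ≠ 0 := Nat.cast_ne_zero.2 (Nat.factorial_ne_zero _)
      have h3 : ((n:ℝ)+1+i) ≠ 0 := by positivity
      have h4 : ((n:ℝ)+2+i) ≠ 0 := by positivity
      field_simp
      ring
    rw [Finset.sum_congr rfl hterm, ← Finset.mul_sum, key n]
    have h5 : ((n:ℝ)+1) ≠ 0 := by positivity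
    field_simp
  rw [hsum]
  have h4 : (4:ℝ)^(-(((n:ℕ)+1 : ℕ) : ℤ)) = (1/2:ℝ)^(2*n+2) := by
    rw [zpow_neg, zpow_natCast, show (4:ℝ) = 2^2 by norm_num, ← pow_mul, one_div, inv_pow]
    ring_nf
  rw [h4]
  push_cast
  have h6 : ((n:ℝ)+1+1) ≠ 0 := by positivity
  field_simp
  ring
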